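/- Let G be a group, f ∈ G a central element of infinite order, p : G → H a surjective group homomorphism whose kernel is the cyclic subgroup generated by f, and suppose every nontrivial abelian subgroup of H is cyclic. If α, β ∈ G satisfy α β α⁻¹ = β f^k for some integer k, then k = 0. -/

import Mathlib

private lemma closure_pair_comm {H : Type*} [Group H] {a b : H} (hab : a * b = b * a) :
    ∀ x ∈ Subgroup.closure {a, b}, ∀ y ∈ Subgroup.closure {a, b}, x * y = y * x := by
  have key : Subgroup.closure {a, b} ≤ Subgroup.centralizer (Subgroup.closure {a, b} : Subgroup H) := by
    rw [Subgroup.closure_le]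
    intro x hx
    rw [SetLike.mem_coe, Subgroup.mem_centralizer_iff]
    intro y hy
    have : Subgroup.closure ({a, b} : Set H) ≤ Subgroup.centralizer {x} := by
      rw [Subgroup.closure_le]
      intro z hz
      rw [SetLike.mem_coe, Subgroup.mem_centralizer_iff]
      intro w hw
      simp only [Set.mem_singleton_iff] at hw
      subst hw
      rcases hx with hx | hx <;> rcases hz with hz | hz <;>
        simp_all [hab, hab.symm]
    have := this hy
    rw [Subgroup.mem_centralizer_iff] at this
    exact (this x rfl).symm
  intro x hx y hy
  exact ((Subgroup.mem_centralizer_iff).mp (key hx) y hy).symm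

theorem stmt_2 (G H : Type*) [Group G] [Group H] (f : G)
    (hf : f ∈ Subgroup.center G) (hinf : ¬ IsOfFinOrder f)
    (p : G →* H) (hsurj : Function.Surjective p)
    (hker : p.ker = Subgroup.zpowers f)
    (hab : ∀ A : Subgroup H, A ≠ ⊥ → (∀ a b : A, a * b = b * a) → IsCyclic A)
    (α β : G) (k : ℤ) (h : α * β * α⁻¹ = β * f ^ k) : k = 0 := by
  -- f is in the kernel
  have hfk : p f = 1 := by
    have : f ∈ p.ker := by rw [hker]; exact Subgroup.mem_zpowers f
    exact this
  set a := p α with ha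
  set b := p β with hb
  -- images commute
  have hcomm : a * b = b * a := by
    have h1 : p (α * β * α⁻¹) = p β := by
      rw [h, map_mul, map_zpow, hfk, one_zpow, mul_one]
    simp only [map_mul, map_inv] at h1
    rw [mul_inv_eq_iff_eq_mul] at h1
    exact h1
  -- main claim: α and β commute
  have hαβ : α * β = β * α := by
    set A := Subgroup.closure ({a, b} : Set H) with hA
    have haA : a ∈ A := Subgroup.subset_closure (by left; rfl)
    have hbA : b ∈ A := Subgroup.subset_closure (by right; rfl)
    by_cases hbot : A = ⊥
    · -- a = b = 1, so α, β are powers of f, hence commute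
      rw [hbot, Subgroup.mem_bot] at haA hbA
      have hα : α ∈ Subgroup.zpowers f := by rw [← hker]; exact haA
      have hβ : β ∈ Subgroup.zpowers f := by rw [← hker]; exact hbA
      obtain ⟨s, hs⟩ := hα
      obtain ⟨t, ht⟩ := hβ
      rw [← hs, ← ht, ← zpow_add, ← zpow_add, add_comm]
    · -- A is cyclic
      have hAcomm : ∀ x y : A, x * y = y * x := by
        intro x y
        ext
        exact closure_pair_comm hcomm x x.2 y y.2
      obtain ⟨c, hc⟩ := (hab A hbot hAcomm)
      obtain ⟨m, hm⟩ := hc ⟨a, haA⟩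
      obtain ⟨n, hn⟩ := hc ⟨b, hbA⟩
      have hm' : a = (c : H) ^ m := by
        have := congrArg (Subtype.val) hm
        simpa using this.symm
      have hn' : b = (c : H) ^ n := by
        have := congrArg (Subtype.val) hn
        simpa using this.symm
      obtain ⟨γ, hγ⟩ := hsurj (c : H)
      -- α⁻¹ * γ^m ∈ ker p
      have hα : α⁻¹ * γ ^ m ∈ Subgroup.zpowers f := by
        rw [← hker, MonoidHom.mem_ker, map_mul, map_inv, map_zpow, hγ, ← ha, hm',
          inv_mul_eq_one]
      have hβ' : β⁻¹ * γ ^ n ∈ Subgroup.zpowers f := by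
        rw [← hker, MonoidHom.mem_ker, map_mul, map_inv, map_zpow, hγ, ← hb, hn',
          inv_mul_eq_one]
      obtain ⟨s, hs0⟩ := hα
      obtain ⟨t, ht0⟩ := hβ'
      have hs : f ^ s = α⁻¹ * γ ^ m := hs0
      have ht : f ^ t = β⁻¹ * γ ^ n := ht0
      have hαe : α = γ ^ m * f ^ (-s) := by
        rw [zpow_neg, eq_mul_inv_iff_mul_eq, hs]; group
      have hβe : β = γ ^ n * f ^ (-t) := by
        rw [zpow_neg, eq_mul_inv_iff_mul_eq, ht]; group
      have hfc : ∀ (j : ℤ) (g : G), f ^ j * g = g * f ^ j := fun j g =>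
        (Subgroup.zpow_mem (Subgroup.center G) hf j).comm g
      rw [hαe, hβe]
      rw [mul_assoc, hfc (-s) (γ ^ n * f ^ (-t)), ← mul_assoc, ← mul_assoc]
      conv_rhs => rw [mul_assoc, hfc (-t) (γ ^ m * f ^ (-s)), ← mul_assoc, ← mul_assoc]
      rw [← zpow_add, ← zpow_add γ, add_comm m n, mul_assoc, mul_assoc,
        ← zpow_add f, ← zpow_add f, add_comm (-t) (-s)]
  -- finish: f^k = 1
  have hfk1 : f ^ k = 1 := by
    have : β * f ^ k = β := by
      rw [← h, hαβ]; group
    exact mul_eq_left.mp this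
  by_contra hk
  exact hinf (isOfFinOrder_iff_zpow_eq_one.mpr ⟨k, hk, hfk1⟩)
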